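/- arXiv:1905.12776 — 3 statements merged into one kernel-verified Lean document; each statement's English description precedes it below -/
import Mathlib

section
/- For m > 0, define the sequence a_0 = 1 and a_{n+1} = (a_n + m)/(a_n + m + 1). Then the limit of a_n as n tends to infinity exists and equals (-m + sqrt(m^2 + 4m))/2. -/
theorem stmt_0 (m : ℝ) (hm : 0 < m) (a : ℕ → ℝ)
    (ha0 : a 0 = 1)
    (harec : ∀ n, a (n + 1) = (a n + m) / (a n + m + 1)) :
    Filter.Tendsto a Filter.atTop
      (nhds ((-m + Real.sqrt (m ^ 2 + 4 * m)) / 2)) := by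
  set s := Real.sqrt (m ^ 2 + 4 * m) with hsdef
  have hs2 : s ^ 2 = m ^ 2 + 4 * m := Real.sq_sqrt (by nlinarith)
  have hs0 : 0 ≤ s := Real.sqrt_nonneg _
  set L := (-m + s) / 2 with hLdef
  have hL0 : 0 < L := by
    have : m < s := by nlinarith
    simp only [hLdef]; linarith
  have hLeq : L ^ 2 + m * L - m = 0 := by
    simp only [hLdef]; nlinarith
  have hpos : ∀ n, 0 < a n := by
    intro n
    induction n with
    | zero => rw [ha0]; norm_num
    | succ k ih =>
      rw [harec k]
      positivity
  have hden : ∀ n, 0 < a n + m + 1 := fun n => by have := hpos n; linarith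
  have hLden : 0 < L + m + 1 := by linarith
  have hident : ∀ n, a (n + 1) - L = (a n - L) / ((a n + m + 1) * (L + m + 1)) := by
    intro n
    rw [harec n]
    have h1 := (hden n).ne'
    field_simp
    linear_combination (-(a n + m + 1)) * hLeq
  set r : ℝ := 1 / (m + 1) ^ 2 with hrdef
  have hr0 : 0 < r := by positivity
  have hr1 : r < 1 := by
    rw [hrdef, div_lt_one (by positivity)]
    nlinarith
  have key : ∀ n, |a (n + 1) - L| ≤ r * |a n - L| := by
    intro n
    rw [hident n, abs_div, abs_of_pos (mul_pos (hden n) hLden), hrdef,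
      div_mul_eq_mul_div, one_mul]
    gcongr
    nlinarith [hpos n, hL0]
  have hgeo : ∀ n, |a n - L| ≤ |a 0 - L| * r ^ n := by
    intro n
    induction n with
    | zero => simp
    | succ k ih =>
      calc |a (k + 1) - L| ≤ r * |a k - L| := key k
        _ ≤ r * (|a 0 - L| * r ^ k) := by
            exact mul_le_mul_of_nonneg_left ih hr0.le
        _ = |a 0 - L| * r ^ (k + 1) := by ring
  have hlim : Filter.Tendsto (fun n => a n - L) Filter.atTop (nhds 0) := by
    apply squeeze_zero_norm (fun n => hgeo n)
    have := tendsto_pow_atTop_nhds_zero_of_lt_one hr0.le hr1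
    have h2 := this.const_mul (|a 0 - L|)
    simpa using h2
  have := hlim.add (tendsto_const_nhds (x := L))
  simpa using this
end

section
/- Let m > 0 and let a_0 = 1, a_{n+1} = (a_n + m)/(a_n + m + 1). With x_1 = (-m + sqrt(m^2+4m))/2 and x_2 = (-m - sqrt(m^2+4m))/2, for all n ≥ 0 we have (a_n - x_1)/(a_n - x_2) = ((1 - x_1)/(1 - x_2))^{n+1}. -/
theorem stmt_2 (m : ℝ) (hm : 0 < m) (a : ℕ → ℝ)
    (ha0 : a 0 = 1)
    (harec : ∀ n, a (n + 1) = (a n + m) / (a n + m + 1))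
    (x₁ x₂ : ℝ)
    (hx1 : x₁ = (-m + Real.sqrt (m ^ 2 + 4 * m)) / 2)
    (hx2 : x₂ = (-m - Real.sqrt (m ^ 2 + 4 * m)) / 2)
    (hpos : ∀ n, 0 < a n - x₂) :
    ∀ n : ℕ, (a n - x₁) / (a n - x₂) = ((1 - x₁) / (1 - x₂)) ^ (n + 1) := by
  have hsnn : Real.sqrt (m ^ 2 + 4 * m) ≥ 0 := Real.sqrt_nonneg _
  have hs : Real.sqrt (m ^ 2 + 4 * m) ^ 2 = m ^ 2 + 4 * m :=
    Real.sq_sqrt (by nlinarith)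
  have h1 : x₁ ^ 2 + m * x₁ - m = 0 := by rw [hx1]; nlinarith [hs]
  have h2 : x₂ ^ 2 + m * x₂ - m = 0 := by rw [hx2]; nlinarith [hs]
  have hslt : Real.sqrt (m ^ 2 + 4 * m) < m + 2 := by nlinarith [hs, hsnn]
  have hx2neg : x₂ < 0 := by rw [hx2]; nlinarith [hs, hsnn]
  have h1x2 : 0 < 1 - x₂ := by linarith
  have hD : ∀ n, 0 < a n + m + 1 := by
    intro n
    have := hpos n
    rw [hx2] at this
    nlinarith [hslt]
  intro n
  induction n with
  | zero => rw [ha0, pow_one]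
  | succ n ih =>
    have hd := (hD n).ne'
    have hp := (hpos n).ne'
    have key1 : a (n + 1) - x₁ = (a n - x₁) * (1 - x₁) / (a n + m + 1) := by
      rw [harec]
      field_simp
      nlinarith [h1]
    have key2 : a (n + 1) - x₂ = (a n - x₂) * (1 - x₂) / (a n + m + 1) := by
      rw [harec]
      field_simp
      nlinarith [h2]
    have h12 : (1:ℝ) - x₂ ≠ 0 := h1x2.ne'
    rw [key1, key2, pow_succ, ← ih]
    field_simp
end

section
/- Suppose f : ℝ^d → ℝ is α-strongly convex (α > 0) with respect to a norm ‖·‖, both f and its Fenchel conjugate f* are differentiable, and f satisfies f(y) ≤ f(x) + ⟨∇f(x), y - x⟩ + (β/2)‖x - y‖² for all x, y. Then for all x, y: f(y) ≥ f(x) + ⟨∇f(x), y - x⟩ + (1/(2β))‖∇f(x) - ∇f(y)‖_*², where ‖·‖_* is the dual norm. -/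
open RealInnerProductSpace

lemma grad_ineq {d : ℕ} (f : EuclideanSpace ℝ (Fin d) → ℝ) (hdiff : Differentiable ℝ f)
    (hconv : ConvexOn ℝ Set.univ f) (x y : EuclideanSpace ℝ (Fin d)) :
    f x + ⟪gradient f x, y - x⟫ ≤ f y := by
  set h : ℝ → ℝ := f ∘ (AffineMap.lineMap x y) with hh
  have hconvh : ConvexOn ℝ Set.univ h := by
    have := hconv.comp_affineMap (AffineMap.lineMap x y)
    simpa using this
  have hg : HasDerivAt (fun t : ℝ => (AffineMap.lineMap x y : ℝ →ᵃ[ℝ] _) t)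
      (y - x) 0 := by
    simp only [AffineMap.lineMap_apply, vsub_eq_sub, vadd_eq_add]
    simpa using ((hasDerivAt_id (0:ℝ)).smul_const (y - x)).add_const x
  have hfd : HasFDerivAt f (InnerProductSpace.toDual ℝ _ (gradient f x)) x :=
    hasGradientAt_iff_hasFDerivAt.mp (hdiff x).hasGradientAt
  have hx0 : (AffineMap.lineMap x y : ℝ →ᵃ[ℝ] _) (0:ℝ) = x := by simp
  have hdh : HasDerivAt h ⟪gradient f x, y - x⟫ 0 := by
    have := (hx0 ▸ hfd).comp_hasDerivAt 0 hg
    simpa [hh, InnerProductSpace.toDual_apply_apply] using this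
  have hslope := hconvh.le_slope_of_hasDerivAt (Set.mem_univ 0) (Set.mem_univ 1)
    one_pos hdh
  have h1 : h 1 = f y := by simp [hh]
  have h0 : h 0 = f x := by simp [hh]
  rw [slope_def_field, h0, h1] at hslope
  simp only [sub_zero, div_one] at hslope
  linarith

theorem stmt_11 (d : ℕ) (α β : ℝ) (hα : 0 < α)
    (N : EuclideanSpace ℝ (Fin d) → ℝ)
    (hN_tri : ∀ x y, N (x + y) ≤ N x + N y)
    (hN_smul : ∀ (r : ℝ) x, N (r • x) = |r| * N x)
    (hN_def : ∀ x, N x = 0 → x = 0)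
    (Nd : EuclideanSpace ℝ (Fin d) → ℝ)
    (hNd : ∀ y, Nd y = sSup {r : ℝ | ∃ x, N x ≤ 1 ∧ r = ⟪x, y⟫})
    (f : EuclideanSpace ℝ (Fin d) → ℝ)
    (hdiff : Differentiable ℝ f)
    (hsc : ∀ x y, ∀ lam : ℝ, lam ∈ Set.Ioo (0 : ℝ) 1 →
      f (lam • x + (1 - lam) • y) ≤
        lam * f x + (1 - lam) * f y - (α / 2) * lam * (1 - lam) * (N (x - y)) ^ 2)
    (hsm : ∀ x y, f y ≤ f x + ⟪gradient f x, y - x⟫ + (β / 2) * (N (x - y)) ^ 2)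
    (fconj : EuclideanSpace ℝ (Fin d) → ℝ)
    (hfconj : ∀ y, fconj y = sSup {r : ℝ | ∃ x, r = ⟪x, y⟫ - f x})
    (hconjdiff : Differentiable ℝ fconj) :
    ∀ x y, f y ≥ f x + ⟪gradient f x, y - x⟫ +
      (1 / (2 * β)) * (Nd (gradient f x - gradient f y)) ^ 2 := by
  -- N is nonnegative and N 0 = 0
  have hN0 : N 0 = 0 := by
    have := hN_smul 0 0
    simpa using this
  have hNnn : ∀ x, 0 ≤ N x := by
    intro x
    have h1 : N (x + (-1 : ℝ) • x) ≤ N x + N ((-1 : ℝ) • x) := hN_tri x _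
    rw [hN_smul] at h1
    simp [hN0] at h1
    linarith
  -- f is convex
  have hconv : ConvexOn ℝ Set.univ f := by
    refine ⟨convex_univ, ?_⟩
    intro a _ b _ μ ν hμ hν hμν
    rcases eq_or_lt_of_le hμ with hμ0 | hμ0
    · simp [← hμ0, show ν = 1 by linarith]
    rcases eq_or_lt_of_le hν with hν0 | hν0
    · simp [← hν0, show μ = 1 by linarith]
    have := hsc a b μ ⟨hμ0, by linarith⟩
    have h1μ : (0:ℝ) ≤ 1 - μ := by linarith
    have hnn : 0 ≤ (α / 2) * μ * (1 - μ) * (N (a - b)) ^ 2 :=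
      mul_nonneg (mul_nonneg (mul_nonneg (by linarith : (0:ℝ) ≤ α / 2) hμ) h1μ)
        (sq_nonneg _)
    have hν1 : ν = 1 - μ := by linarith
    rw [hν1]
    calc f (μ • a + (1 - μ) • b) ≤ μ * f a + (1 - μ) * f b -
          (α / 2) * μ * (1 - μ) * (N (a - b)) ^ 2 := by
          have := hsc a b μ ⟨hμ0, by linarith⟩; linarith
      _ ≤ μ * f a + (1 - μ) * f b := by linarith
  have G : ∀ x y, f x + ⟪gradient f x, y - x⟫ ≤ f y := grad_ineq f hdiff hconv
  intro x y
  set gx := gradient f x with hgx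
  set gy := gradient f y with hgy
  set D := f y - f x - ⟪gx, y - x⟫ with hDdef
  have hD : 0 ≤ D := by
    have h := G x y
    rw [← hgx] at h
    linarith [hDdef]
  rcases le_or_gt β 0 with hβ | hβ
  · -- trivial case: coefficient is ≤ 0
    have hcoef : (1 / (2 * β)) * (Nd (gx - gy)) ^ 2 ≤ 0 := by
      rcases eq_or_lt_of_le hβ with h0 | h0
      · rw [h0]; norm_num
      · have h1 : 1 / (2 * β) < 0 := by
          apply div_neg_of_pos_of_neg one_pos; linarith
        have := sq_nonneg (Nd (gx - gy))
        nlinarith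
    have := G x y
    linarith
  · -- main case β > 0
    have key : ∀ u, N u ≤ 1 → ⟪u, gx - gy⟫ ≤ Real.sqrt (2 * β * D) := by
      intro u hu
      set s := ⟪gy - gx, u⟫ with hs
      set t := s / β with htdef
      have ht : β * t = s := by rw [htdef]; field_simp
      set w := y - t • u with hw
      have h1 : f x + ⟪gx, w - x⟫ ≤ f w := by
        have h := G x w; rw [← hgx] at h; exact h
      have h2 : f w ≤ f y + ⟪gy, w - y⟫ + (β / 2) * (N (y - w)) ^ 2 := by
        have h := hsm y w; rw [← hgy] at h; exact h
      have hyw : y - w = t • u := by simp [hw]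
      have hNyw : (N (y - w)) ^ 2 ≤ t ^ 2 := by
        rw [hyw, hN_smul]
        have h3 : |t| * N u ≤ |t| * 1 :=
          mul_le_mul_of_nonneg_left hu (abs_nonneg _)
        have h4 : 0 ≤ |t| * N u := mul_nonneg (abs_nonneg _) (hNnn u)
        calc (|t| * N u) ^ 2 ≤ (|t| * 1) ^ 2 := by nlinarith
          _ = t ^ 2 := by rw [mul_one, sq_abs]
      have hwx : ⟪gx, w - x⟫ = ⟪gx, y - x⟫ - t * ⟪gx, u⟫ := by
        have hwxe : w - x = (y - x) - t • u := by rw [hw]; abel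
        rw [hwxe, inner_sub_right, real_inner_smul_right]
      have hwy : ⟪gy, w - y⟫ = -(t * ⟪gy, u⟫) := by
        have hwye : w - y = -(t • u) := by rw [hw]; abel
        rw [hwye, inner_neg_right, real_inner_smul_right]
      have hsplit : s = ⟪gy, u⟫ - ⟪gx, u⟫ := by rw [hs, inner_sub_left]
      rw [hwx] at h1
      rw [hwy] at h2
      have h5 : (β / 2) * (N (y - w)) ^ 2 ≤ (β / 2) * t ^ 2 :=
        mul_le_mul_of_nonneg_left hNyw (by linarith)
      have he : t * ⟪gy, u⟫ - t * ⟪gx, u⟫ = β * t ^ 2 := by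
        calc t * ⟪gy, u⟫ - t * ⟪gx, u⟫ = t * (⟪gy, u⟫ - ⟪gx, u⟫) := by ring
          _ = t * s := by rw [← hsplit]
          _ = β * t ^ 2 := by rw [← ht]; ring
      have hkey2 : (β / 2) * t ^ 2 ≤ D := by linarith [hDdef]
      have h9 : (2 * β) * ((β / 2) * t ^ 2) ≤ (2 * β) * D :=
        mul_le_mul_of_nonneg_left hkey2 (by linarith)
      have hs2 : s ^ 2 ≤ 2 * β * D := by
        rw [← ht]
        calc (β * t) ^ 2 = (2 * β) * ((β / 2) * t ^ 2) := by ring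
          _ ≤ (2 * β) * D := h9
          _ = 2 * β * D := rfl
      have h10 : ⟪u, gx - gy⟫ = -s := by
        rw [hs, inner_sub_right, inner_sub_left, real_inner_comm u gx,
          real_inner_comm u gy]
        ring
      rw [h10]
      calc -s ≤ |s| := neg_le_abs s
        _ = Real.sqrt (s ^ 2) := (Real.sqrt_sq_eq_abs s).symm
        _ ≤ Real.sqrt (2 * β * D) := Real.sqrt_le_sqrt hs2
    -- the sup set
    set S := {r : ℝ | ∃ u, N u ≤ 1 ∧ r = ⟪u, gx - gy⟫} with hS
    have hmem0 : (0:ℝ) ∈ S := ⟨0, by simp [hN0], by simp⟩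
    have hbdd : ∀ r ∈ S, r ≤ Real.sqrt (2 * β * D) := by
      rintro r ⟨u, hu, rfl⟩; exact key u hu
    have hne : S.Nonempty := ⟨0, hmem0⟩
    have hsup_le : sSup S ≤ Real.sqrt (2 * β * D) := csSup_le hne hbdd
    have hsup_nn : 0 ≤ sSup S :=
      le_csSup ⟨Real.sqrt (2 * β * D), hbdd⟩ hmem0
    have hNdval : Nd (gx - gy) = sSup S := hNd _
    have hsq : (Nd (gx - gy)) ^ 2 ≤ 2 * β * D := by
      rw [hNdval]
      have h11 : (sSup S) ^ 2 ≤ (Real.sqrt (2 * β * D)) ^ 2 := by nlinarith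
      have h12 : (Real.sqrt (2 * β * D)) ^ 2 = 2 * β * D :=
        Real.sq_sqrt (by positivity)
      linarith
    have h13 : (1 / (2 * β)) * (Nd (gx - gy)) ^ 2 ≤ D := by
      rw [div_mul_eq_mul_div, one_mul, div_le_iff₀ (by linarith : (0:ℝ) < 2 * β)]
      linarith [hsq]
    simp only [hDdef] at h13
    linarith
end
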